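/- The map sending σ ∈ S_n to the sequence (Δ(σ^{(n-1)}), ..., Δ(σ'), Δ(σ)), where σ^{(i)} denotes σ with its i largest values deleted, is a bijection from S_n to the set of n-chains of Dyck shapes D_1 ⊏ ... ⊏ D_n. -/

import Mathlib

/-- A Dyck word: every prefix has at least as many up steps (`true`) as down
steps (`false`), and the total numbers of up and down steps are equal. -/
def IsDyck (w : List Bool) : Prop :=
  (∀ p : ℕ, (w.take p).count false ≤ (w.take p).count true) ∧
    w.count false = w.count true

/-- Ribbon addition: `E` is obtained from `D ++ [false, false]` by changing a
single down step, other than the last one, into an up step (this includes the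
case `E = D ++ [true, false]`). -/
def Ribbon (D E : List Bool) : Prop :=
  ∃ k, k < D.length + 1 ∧ (D ++ [false, false])[k]? = some false ∧
    E = (D ++ [false, false]).set k true

/-- The one-line word of `σ ∈ S_n` on values `1, …, n`, extended by the
conventions `σ₀ = 0` and `σ_{n+1} = n+1`. -/
def extPerm {n : ℕ} (σ : Equiv.Perm (Fin n)) : ℕ → ℕ := fun i =>
  if h : 1 ≤ i ∧ i ≤ n then ((σ ⟨i - 1, by omega⟩ : Fin n) : ℕ) + 1
  else if i = 0 then 0 else n + 1

/-- The position (between `1` and `n`) of the value `v` in the one-line word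
of `σ`. -/
def posOf {n : ℕ} (σ : Equiv.Perm (Fin n)) (v : ℕ) : ℕ :=
  if h : v - 1 < n then ((σ.symm ⟨v - 1, h⟩ : Fin n) : ℕ) + 1 else 0

/-- The profile `Δ(σ)` of a permutation: the factor `w_{2i-1} w_{2i}` is `UU`
if the value `i` is a valley, `DD` if it is a peak, `UD` if it is a double
ascent and `DU` if it is a double descent. -/
def profile {n : ℕ} (σ : Equiv.Perm (Fin n)) : List Bool :=
  (List.range (2 * n)).map fun j =>
    let p := posOf σ (j / 2 + 1)
    if j % 2 = 0 then decide (extPerm σ p < extPerm σ (p + 1))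
    else decide (extPerm σ p < extPerm σ (p - 1))

/-- The permutation `σ'` obtained from `σ ∈ S_{n+1}` by deleting the largest
value from its one-line word. -/
noncomputable def delTop {n : ℕ} (σ : Equiv.Perm (Fin (n + 1))) : Equiv.Perm (Fin n) :=
  Equiv.ofBijective
    (fun j => (σ ((σ.symm (Fin.last n)).succAbove j)).castPred
      (fun h => Fin.succAbove_ne (σ.symm (Fin.last n)) j
        (by simpa using congrArg σ.symm h)))
    (Finite.injective_iff_bijective.mp (fun j₁ j₂ h => by
      have h2 := congrArg Fin.castSucc h
      rw [Fin.castSucc_castPred, Fin.castSucc_castPred] at h2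
      exact Fin.succAbove_right_injective (σ.injective h2)))


/-- Delete the largest value from a permutation (identity in size `0`). -/
noncomputable def delTop' : {m : ℕ} → Equiv.Perm (Fin m) → Equiv.Perm (Fin (m - 1))
  | 0, σ => σ
  | _ + 1, σ => delTop σ

/-- `dels σ m` is `σ^{(m)}`: the permutation obtained from `σ` by deleting its
`m` largest values. -/
noncomputable def dels {n : ℕ} (σ : Equiv.Perm (Fin n)) : (m : ℕ) → Equiv.Perm (Fin (n - m))
  | 0 => σ
  | m + 1 => delTop' (dels σ m)


open Equiv Fin

namespace PCB
variable {n : ℕ}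

lemma extPerm_zero (σ : Perm (Fin n)) : extPerm σ 0 = 0 := by simp [extPerm]

lemma extPerm_of_gt (σ : Perm (Fin n)) {i : ℕ} (h : n < i) : extPerm σ i = n + 1 := by
  have : ¬ (1 ≤ i ∧ i ≤ n) := by omega
  simp [extPerm, this]; omega

lemma extPerm_mem (σ : Perm (Fin n)) {i : ℕ} (h1 : 1 ≤ i) (h2 : i ≤ n) :
    1 ≤ extPerm σ i ∧ extPerm σ i ≤ n := by
  simp only [extPerm, dif_pos (⟨h1, h2⟩ : 1 ≤ i ∧ i ≤ n)]
  exact ⟨by omega, by have := (σ ⟨i - 1, by omega⟩).isLt; omega⟩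

lemma posOf_mem (σ : Perm (Fin n)) {v : ℕ} (h1 : 1 ≤ v) (h2 : v ≤ n) :
    1 ≤ posOf σ v ∧ posOf σ v ≤ n := by
  simp only [posOf, dif_pos (show v - 1 < n by omega)]
  exact ⟨by omega, by have := (σ.symm ⟨v - 1, by omega⟩).isLt; omega⟩

lemma extPerm_posOf (σ : Perm (Fin n)) {v : ℕ} (h1 : 1 ≤ v) (h2 : v ≤ n) :
    extPerm σ (posOf σ v) = v := by
  obtain ⟨hp1, hp2⟩ := posOf_mem σ h1 h2
  simp only [posOf, dif_pos (show v - 1 < n by omega)] at *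
  simp only [extPerm, dif_pos (⟨hp1, hp2⟩ : _ ∧ _)]
  have : (⟨(σ.symm ⟨v-1, by omega⟩ : Fin n) + 1 - 1, by omega⟩ : Fin n)
      = σ.symm ⟨v-1, by omega⟩ := by
    apply Fin.ext; simp
  rw [this, Equiv.apply_symm_apply]
  simp; omega

lemma extPerm_inj (σ : Perm (Fin n)) {i j : ℕ} (hi : i ≤ n + 1) (hj : j ≤ n + 1)
    (h : extPerm σ i = extPerm σ j) : i = j := by
  rcases show i = 0 ∨ (1 ≤ i ∧ i ≤ n) ∨ i = n + 1 by omega with hi' | hi' | hi' <;>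
    rcases show j = 0 ∨ (1 ≤ j ∧ j ≤ n) ∨ j = n + 1 by omega with hj' | hj' | hj'
  · omega
  · rw [hi', extPerm_zero] at h; have := extPerm_mem σ hj'.1 hj'.2; omega
  · rw [hi', extPerm_zero, hj', extPerm_of_gt σ (show n < n + 1 by omega)] at h; omega
  · rw [hj', extPerm_zero] at h; have := extPerm_mem σ hi'.1 hi'.2; omega
  · simp only [extPerm, dif_pos (⟨hi'.1, hi'.2⟩ : _ ∧ _),
      dif_pos (⟨hj'.1, hj'.2⟩ : _ ∧ _)] at h
    have h2 : (⟨i - 1, by omega⟩ : Fin n) = ⟨j - 1, by omega⟩ :=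
      σ.injective (Fin.ext (by omega))
    have h3 := Fin.mk.injEq .. ▸ h2
    omega
  · rw [hj', extPerm_of_gt σ (show n < n + 1 by omega)] at h; have := extPerm_mem σ hi'.1 hi'.2; omega
  · rw [hi', extPerm_of_gt σ (show n < n + 1 by omega), hj', extPerm_zero] at h; omega
  · rw [hi', extPerm_of_gt σ (show n < n + 1 by omega)] at h; have := extPerm_mem σ hj'.1 hj'.2; omega
  · omega

lemma posOf_eq_of (σ : Perm (Fin n)) {i v : ℕ} (h1 : 1 ≤ i) (h2 : i ≤ n)
    (h : extPerm σ i = v) : posOf σ v = i := by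
  subst h
  have hv := extPerm_mem σ h1 h2
  have hp := posOf_mem σ hv.1 hv.2
  exact extPerm_inj σ (by omega) (by omega) (extPerm_posOf σ hv.1 hv.2)

end PCB

namespace PCB
variable {n : ℕ}

/-- 1-indexed position of the maximal value of `σ ∈ S_{n+1}`. -/
def Ppos (σ : Perm (Fin (n + 1))) : ℕ := ((σ.symm (Fin.last n) : Fin (n + 1)) : ℕ) + 1

lemma Ppos_mem (σ : Perm (Fin (n + 1))) : 1 ≤ Ppos σ ∧ Ppos σ ≤ n + 1 := by
  have := (σ.symm (Fin.last n)).isLt; unfold Ppos; omega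

lemma posOf_top (σ : Perm (Fin (n + 1))) : posOf σ (n + 1) = Ppos σ := by
  have h : n + 1 - 1 < n + 1 := by omega
  simp only [posOf, dif_pos h, Ppos]
  congr 2

lemma extPerm_Ppos (σ : Perm (Fin (n + 1))) : extPerm σ (Ppos σ) = n + 1 := by
  rw [← posOf_top]; exact extPerm_posOf σ (by omega) le_rfl

lemma delTop_apply (σ : Perm (Fin (n + 1))) (j : Fin n) :
    ((delTop σ j : Fin n) : ℕ) = ((σ ((σ.symm (Fin.last n)).succAbove j) : Fin (n + 1)) : ℕ) :=
  rfl

lemma extPerm_delTop_lt (σ : Perm (Fin (n + 1))) {i : ℕ} (h1 : 1 ≤ i)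
    (h : i < Ppos σ) : extPerm (delTop σ) i = extPerm σ i := by
  have hP := Ppos_mem σ
  have hi2 : i ≤ n := by omega
  have harg : (σ.symm (Fin.last n)).succAbove ⟨i - 1, by omega⟩ = ⟨i - 1, by omega⟩ := by
    rw [Fin.succAbove_of_castSucc_lt _ _ (by rw [Fin.lt_def]; simp [Ppos] at h ⊢; omega)]
    exact Fin.ext (by simp)
  simp only [extPerm, dif_pos (⟨h1, hi2⟩ : _ ∧ _), dif_pos (⟨h1, by omega⟩ : 1 ≤ i ∧ i ≤ n + 1)]
  rw [delTop_apply, harg]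

lemma extPerm_delTop_ge (σ : Perm (Fin (n + 1))) {i : ℕ} (h1 : 1 ≤ i)
    (h : Ppos σ ≤ i) (h2 : i ≤ n) : extPerm (delTop σ) i = extPerm σ (i + 1) := by
  have harg : (σ.symm (Fin.last n)).succAbove ⟨i - 1, by omega⟩ = ⟨i + 1 - 1, by omega⟩ := by
    rw [Fin.succAbove_of_le_castSucc _ _ (by rw [Fin.le_def]; simp [Ppos] at h ⊢; omega)]
    exact Fin.ext (by simp [Fin.succ]; omega)
  simp only [extPerm, dif_pos (⟨h1, h2⟩ : _ ∧ _),
    dif_pos (⟨by omega, by omega⟩ : 1 ≤ i + 1 ∧ i + 1 ≤ n + 1)]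
  rw [delTop_apply, harg]

lemma posOf_ne_Ppos (σ : Perm (Fin (n + 1))) {v : ℕ} (h1 : 1 ≤ v) (h2 : v ≤ n) :
    posOf σ v ≠ Ppos σ := by
  intro hc
  have := extPerm_posOf σ h1 (by omega : v ≤ n + 1)
  rw [hc, extPerm_Ppos] at this; omega

lemma posOf_delTop_lt (σ : Perm (Fin (n + 1))) {v : ℕ} (h1 : 1 ≤ v) (h2 : v ≤ n)
    (h : posOf σ v < Ppos σ) : posOf (delTop σ) v = posOf σ v := by
  have hq := posOf_mem σ h1 (by omega : v ≤ n + 1)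
  have hP := Ppos_mem σ
  exact posOf_eq_of _ hq.1 (by omega)
    ((extPerm_delTop_lt σ hq.1 h).trans (extPerm_posOf σ h1 (by omega)))

lemma posOf_delTop_ge (σ : Perm (Fin (n + 1))) {v : ℕ} (h1 : 1 ≤ v) (h2 : v ≤ n)
    (h : Ppos σ < posOf σ v) : posOf (delTop σ) v = posOf σ v - 1 := by
  have hq := posOf_mem σ h1 (by omega : v ≤ n + 1)
  have hP := Ppos_mem σ
  have : extPerm (delTop σ) (posOf σ v - 1) = v := by
    rw [extPerm_delTop_ge σ (by omega) (by omega) (by omega),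
      show posOf σ v - 1 + 1 = posOf σ v by omega]
    exact extPerm_posOf σ h1 (by omega)
  exact posOf_eq_of _ (by omega) (by omega) this

end PCB

namespace PCB
variable {n : ℕ}

/-- The `j`-th letter of the profile. -/
def letter {m : ℕ} (σ : Perm (Fin m)) (j : ℕ) : Bool :=
  if j % 2 = 0 then decide (extPerm σ (posOf σ (j / 2 + 1)) < extPerm σ (posOf σ (j / 2 + 1) + 1))
  else decide (extPerm σ (posOf σ (j / 2 + 1)) < extPerm σ (posOf σ (j / 2 + 1) - 1))

lemma profile_eq {m : ℕ} (σ : Perm (Fin m)) :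
    profile σ = (List.range (2 * m)).map (letter σ) := rfl

lemma length_profile {m : ℕ} (σ : Perm (Fin m)) : (profile σ).length = 2 * m := by
  simp [profile_eq]

lemma getElem_profile {m : ℕ} (σ : Perm (Fin m)) {j : ℕ} (h : j < 2 * m) :
    (profile σ)[j]'(by rw [length_profile]; exact h) = letter σ j := by
  simp [profile_eq]

lemma letter_even {m : ℕ} (σ : Perm (Fin m)) {j : ℕ} (h : j % 2 = 0) :
    letter σ j =
      decide (extPerm σ (posOf σ (j / 2 + 1)) < extPerm σ (posOf σ (j / 2 + 1) + 1)) := by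
  rw [letter, if_pos h]

lemma letter_odd {m : ℕ} (σ : Perm (Fin m)) {j : ℕ} (h : j % 2 = 1) :
    letter σ j =
      decide (extPerm σ (posOf σ (j / 2 + 1)) < extPerm σ (posOf σ (j / 2 + 1) - 1)) := by
  rw [letter, if_neg (by omega)]

/-- The index of the flipped step. -/
def kOf (σ : Perm (Fin (n + 1))) : ℕ :=
  if Ppos σ = n + 1 then 2 * n
  else if extPerm σ (Ppos σ - 1) < extPerm σ (Ppos σ + 1)
    then 2 * (extPerm σ (Ppos σ + 1) - 1) + 1
    else 2 * (extPerm σ (Ppos σ - 1) - 1)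

lemma kOf_eq_top (σ : Perm (Fin (n + 1))) (h : Ppos σ = n + 1) : kOf σ = 2 * n :=
  if_pos h

lemma kOf_eq_odd (σ : Perm (Fin (n + 1))) (h : Ppos σ ≠ n + 1)
    (hab : extPerm σ (Ppos σ - 1) < extPerm σ (Ppos σ + 1)) :
    kOf σ = 2 * (extPerm σ (Ppos σ + 1) - 1) + 1 := by
  rw [kOf, if_neg h, if_pos hab]

lemma kOf_eq_even (σ : Perm (Fin (n + 1))) (h : Ppos σ ≠ n + 1)
    (hab : ¬ extPerm σ (Ppos σ - 1) < extPerm σ (Ppos σ + 1)) :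
    kOf σ = 2 * (extPerm σ (Ppos σ - 1) - 1) := by
  rw [kOf, if_neg h, if_neg hab]

section facts
variable (σ : Perm (Fin (n + 1)))

lemma b_facts (h : Ppos σ ≤ n) :
    1 ≤ extPerm σ (Ppos σ + 1) ∧ extPerm σ (Ppos σ + 1) ≤ n ∧
      posOf σ (extPerm σ (Ppos σ + 1)) = Ppos σ + 1 := by
  have hP := Ppos_mem σ
  have h1 := extPerm_mem σ (i := Ppos σ + 1) (by omega) (by omega)
  have hne : extPerm σ (Ppos σ + 1) ≠ n + 1 := by
    intro hc
    have := extPerm_inj σ (i := Ppos σ + 1) (j := Ppos σ) (by omega) (by omega)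
      (hc.trans (extPerm_Ppos σ).symm)
    omega
  exact ⟨h1.1, by omega, posOf_eq_of σ (by omega) (by omega) rfl⟩

lemma a_facts (h : 2 ≤ Ppos σ) :
    1 ≤ extPerm σ (Ppos σ - 1) ∧ extPerm σ (Ppos σ - 1) ≤ n ∧
      posOf σ (extPerm σ (Ppos σ - 1)) = Ppos σ - 1 := by
  have hP := Ppos_mem σ
  have h1 := extPerm_mem σ (i := Ppos σ - 1) (by omega) (by omega)
  have hne : extPerm σ (Ppos σ - 1) ≠ n + 1 := by
    intro hc
    have := extPerm_inj σ (i := Ppos σ - 1) (j := Ppos σ) (by omega) (by omega)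
      (hc.trans (extPerm_Ppos σ).symm)
    omega
  exact ⟨h1.1, by omega, posOf_eq_of σ (by omega) (by omega) rfl⟩

lemma a_zero (h : Ppos σ = 1) : extPerm σ (Ppos σ - 1) = 0 := by
  rw [h]; exact extPerm_zero σ

lemma ab_ne (h2 : 2 ≤ Ppos σ) (h : Ppos σ ≤ n) :
    extPerm σ (Ppos σ - 1) ≠ extPerm σ (Ppos σ + 1) := by
  have hP := Ppos_mem σ
  intro hc
  have := extPerm_inj σ (i := Ppos σ - 1) (j := Ppos σ + 1) (by omega) (by omega) hc
  omega

lemma kOf_le (σ : Perm (Fin (n + 1))) : kOf σ ≤ 2 * n := by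
  have hP := Ppos_mem σ
  by_cases h : Ppos σ = n + 1
  · rw [kOf_eq_top σ h]
  · have hb := b_facts σ (by omega)
    by_cases hab : extPerm σ (Ppos σ - 1) < extPerm σ (Ppos σ + 1)
    · rw [kOf_eq_odd σ h hab]; omega
    · rw [kOf_eq_even σ h hab]
      have ha : 2 ≤ Ppos σ := by
        by_contra hc
        have := a_zero σ (by omega)
        omega
      have := a_facts σ ha
      omega

end facts
end PCB

namespace PCB
variable {n : ℕ}

lemma two_le_Ppos (σ : Perm (Fin (n + 1))) (hPt : Ppos σ ≠ n + 1)
    (hab : ¬ extPerm σ (Ppos σ - 1) < extPerm σ (Ppos σ + 1)) : 2 ≤ Ppos σ := by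
  have hP := Ppos_mem σ
  by_contra hc
  have h0 := a_zero σ (by omega)
  have hb := b_facts σ (by omega)
  omega

lemma ne_kOf_of_even (σ : Perm (Fin (n + 1))) {j : ℕ} (hpar : j % 2 = 0) (hj : j < 2 * n)
    (hq : posOf σ (j / 2 + 1) ≠ Ppos σ - 1) : j ≠ kOf σ := by
  have hP := Ppos_mem σ
  by_cases hPt : Ppos σ = n + 1
  · rw [kOf_eq_top σ hPt]; omega
  · by_cases hab : extPerm σ (Ppos σ - 1) < extPerm σ (Ppos σ + 1)
    · rw [kOf_eq_odd σ hPt hab]; omega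
    · rw [kOf_eq_even σ hPt hab]
      obtain ⟨ha1, han, hpa⟩ := a_facts σ (two_le_Ppos σ hPt hab)
      intro hc
      have hva : j / 2 + 1 = extPerm σ (Ppos σ - 1) := by omega
      exact hq (hva ▸ hpa)

lemma ne_kOf_of_odd (σ : Perm (Fin (n + 1))) {j : ℕ} (hpar : j % 2 = 1) (hj : j < 2 * n)
    (hq : posOf σ (j / 2 + 1) ≠ Ppos σ + 1) : j ≠ kOf σ := by
  have hP := Ppos_mem σ
  by_cases hPt : Ppos σ = n + 1
  · rw [kOf_eq_top σ hPt]; omega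
  · by_cases hab : extPerm σ (Ppos σ - 1) < extPerm σ (Ppos σ + 1)
    · rw [kOf_eq_odd σ hPt hab]
      obtain ⟨hb1, hbn, hpb⟩ := b_facts σ (by omega)
      intro hc
      have hvb : j / 2 + 1 = extPerm σ (Ppos σ + 1) := by omega
      exact hq (hvb ▸ hpb)
    · rw [kOf_eq_even σ hPt hab]; omega

lemma letter_key (σ : Perm (Fin (n + 1))) {j : ℕ} (hj : j < 2 * (n + 1)) :
    letter σ j =
      if j = kOf σ then true else if j < 2 * n then letter (delTop σ) j else false := by
  have hP := Ppos_mem σ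
  have htop := extPerm_Ppos σ
  have hkle := kOf_le σ
  by_cases hj2 : 2 * n ≤ j
  · -- the two last letters, value n+1
    have hv : j / 2 + 1 = n + 1 := by omega
    by_cases hpar : j % 2 = 0
    · have hjeq : j = 2 * n := by omega
      rw [letter_even σ hpar, hv, posOf_top σ, htop]
      by_cases hPt : Ppos σ = n + 1
      · rw [if_pos (by rw [hjeq, kOf_eq_top σ hPt])]
        rw [hPt, extPerm_of_gt σ (show n + 1 < n + 1 + 1 by omega)]
        simp
      · have hb := b_facts σ (by omega)
        have hne : j ≠ kOf σ := by
          by_cases hab : extPerm σ (Ppos σ - 1) < extPerm σ (Ppos σ + 1)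
          · rw [kOf_eq_odd σ hPt hab]; omega
          · rw [kOf_eq_even σ hPt hab]
            have := a_facts σ (two_le_Ppos σ hPt hab)
            omega
        rw [if_neg hne, if_neg (by omega)]
        simp; omega
    · have hpar' : j % 2 = 1 := by omega
      rw [letter_odd σ hpar', hv, posOf_top σ, htop]
      have e1 : extPerm σ (Ppos σ - 1) ≤ n := by
        by_cases h2 : 2 ≤ Ppos σ
        · exact (a_facts σ h2).2.1
        · rw [a_zero σ (by omega)]; omega
      rw [if_neg (by omega), if_neg (by omega)]
      simp; omega
  · -- j < 2n, value v ≤ n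
    have hjn : j < 2 * n := by omega
    have hv2 : j / 2 + 1 ≤ n := by omega
    have hq := posOf_mem σ (show 1 ≤ j / 2 + 1 by omega) (by omega)
    have hqP := posOf_ne_Ppos σ (show 1 ≤ j / 2 + 1 by omega) hv2
    have hqv := extPerm_posOf σ (show 1 ≤ j / 2 + 1 by omega) (by omega : j / 2 + 1 ≤ n + 1)
    have hq'v := extPerm_posOf (delTop σ) (show 1 ≤ j / 2 + 1 by omega) hv2
    rcases lt_or_gt_of_ne hqP with hlt | hgt
    · -- position of v is left of the max
      have hq' := posOf_delTop_lt σ (show 1 ≤ j / 2 + 1 by omega) hv2 hlt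
      by_cases hq1 : posOf σ (j / 2 + 1) + 1 < Ppos σ
      · have heq : extPerm (delTop σ) (posOf σ (j / 2 + 1) + 1)
            = extPerm σ (posOf σ (j / 2 + 1) + 1) := extPerm_delTop_lt σ (by omega) hq1
        have hltP : extPerm (delTop σ) (posOf σ (j / 2 + 1))
            = extPerm σ (posOf σ (j / 2 + 1)) := extPerm_delTop_lt σ (by omega) hlt
        by_cases hpar : j % 2 = 0
        · rw [if_neg (ne_kOf_of_even σ hpar hjn (by omega)), if_pos hjn,
            letter_even σ hpar, letter_even (delTop σ) hpar, hq', heq, hltP]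
        · have hm1 : extPerm (delTop σ) (posOf σ (j / 2 + 1) - 1)
              = extPerm σ (posOf σ (j / 2 + 1) - 1) := by
            by_cases h0 : posOf σ (j / 2 + 1) - 1 = 0
            · rw [h0, extPerm_zero, extPerm_zero]
            · exact extPerm_delTop_lt σ (by omega) (by omega)
          rw [if_neg (ne_kOf_of_odd σ (by omega) hjn (by omega)), if_pos hjn,
            letter_odd σ (by omega), letter_odd (delTop σ) (by omega), hq', hm1, hltP]
      · -- v is immediately to the left of the max
        have hq1' : posOf σ (j / 2 + 1) + 1 = Ppos σ := by omega
        by_cases hpar : j % 2 = 0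
        · rw [letter_even σ hpar, hqv, hq1', htop]
          by_cases hPt : Ppos σ = n + 1
          · rw [if_neg (by rw [kOf_eq_top σ hPt]; omega), if_pos hjn,
              letter_even (delTop σ) hpar, hq'v, hq', hq1', hPt,
              extPerm_of_gt (delTop σ) (show n < n + 1 by omega)]
          · have hb := b_facts σ (by omega)
            have hveqa : extPerm σ (Ppos σ - 1) = j / 2 + 1 := by
              rw [← hq1', Nat.add_sub_cancel]; exact hqv
            have hτb : extPerm (delTop σ) (Ppos σ)
                = extPerm σ (Ppos σ + 1) := extPerm_delTop_ge σ (by omega) le_rfl (by omega)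
            by_cases hab : extPerm σ (Ppos σ - 1) < extPerm σ (Ppos σ + 1)
            · rw [if_neg (by rw [kOf_eq_odd σ hPt hab]; omega), if_pos hjn,
                letter_even (delTop σ) hpar, hq'v, hq', hq1', hτb]
              simp; omega
            · rw [if_pos (by rw [kOf_eq_even σ hPt hab]; omega)]
              simp; omega
        · -- odd letter of v, unchanged since it looks left
          have hm1 : extPerm (delTop σ) (posOf σ (j / 2 + 1) - 1)
              = extPerm σ (posOf σ (j / 2 + 1) - 1) := by
            by_cases h0 : posOf σ (j / 2 + 1) - 1 = 0
            · rw [h0, extPerm_zero, extPerm_zero]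
            · exact extPerm_delTop_lt σ (by omega) (by omega)
          have hltP : extPerm (delTop σ) (posOf σ (j / 2 + 1))
              = extPerm σ (posOf σ (j / 2 + 1)) := extPerm_delTop_lt σ (by omega) hlt
          rw [if_neg (ne_kOf_of_odd σ (by omega) hjn (by omega)), if_pos hjn,
            letter_odd σ (by omega), letter_odd (delTop σ) (by omega), hq', hm1, hltP]
    · -- position of v is right of the max
      have hPt : Ppos σ ≤ n := by omega
      have hq' := posOf_delTop_ge σ (show 1 ≤ j / 2 + 1 by omega) hv2 hgt
      have hτq : extPerm (delTop σ) (posOf σ (j / 2 + 1) - 1)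
          = extPerm σ (posOf σ (j / 2 + 1)) := by
        rw [extPerm_delTop_ge σ (by omega) (by omega) (by omega),
          show posOf σ (j / 2 + 1) - 1 + 1 = posOf σ (j / 2 + 1) by omega]
      by_cases hpar : j % 2 = 0
      · -- even letter, looks right; never the flipped one here
        have hne : j ≠ kOf σ := ne_kOf_of_even σ hpar hjn (by omega)
        rw [if_neg hne, if_pos hjn, letter_even σ hpar, letter_even (delTop σ) hpar, hq',
          show posOf σ (j / 2 + 1) - 1 + 1 = posOf σ (j / 2 + 1) by omega, hτq]
        by_cases hqn : posOf σ (j / 2 + 1) ≤ n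
        · rw [extPerm_delTop_ge σ (by omega) (by omega) hqn]
        · rw [extPerm_of_gt (delTop σ) (show n < posOf σ (j / 2 + 1) by omega),
            extPerm_of_gt σ (show n + 1 < posOf σ (j / 2 + 1) + 1 by omega), hqv]
          simp; omega
      · -- odd letter, looks left
        by_cases hgt1 : posOf σ (j / 2 + 1) = Ppos σ + 1
        · -- v immediately right of max
          rw [letter_odd σ (by omega), hqv, hgt1, Nat.add_sub_cancel, htop]
          have hbeqv : extPerm σ (Ppos σ + 1) = j / 2 + 1 := by rw [← hgt1]; exact hqv
          have hτa : extPerm (delTop σ) (Ppos σ - 1) = extPerm σ (Ppos σ - 1) := by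
            by_cases h0 : Ppos σ - 1 = 0
            · rw [h0, extPerm_zero, extPerm_zero]
            · exact extPerm_delTop_lt σ (by omega) (by omega)
          by_cases hab : extPerm σ (Ppos σ - 1) < extPerm σ (Ppos σ + 1)
          · rw [if_pos (by rw [kOf_eq_odd σ (by omega) hab]; omega)]
            simp; omega
          · have ha2 := two_le_Ppos σ (by omega) hab
            have hanb := ab_ne σ ha2 hPt
            rw [if_neg (by rw [kOf_eq_even σ (by omega) hab]; omega), if_pos hjn,
              letter_odd (delTop σ) (by omega), hq'v, hq', hgt1, Nat.add_sub_cancel, hτa]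
            simp; omega
        · -- v at least two to the right of max
          have hgt2 : Ppos σ + 2 ≤ posOf σ (j / 2 + 1) := by omega
          have hne : j ≠ kOf σ := ne_kOf_of_odd σ (by omega) hjn (by omega)
          have hτm : extPerm (delTop σ) (posOf σ (j / 2 + 1) - 1 - 1)
              = extPerm σ (posOf σ (j / 2 + 1) - 1) := by
            rw [extPerm_delTop_ge σ (by omega) (by omega) (by omega),
              show posOf σ (j / 2 + 1) - 1 - 1 + 1 = posOf σ (j / 2 + 1) - 1 by omega]
          rw [if_neg hne, if_pos hjn, letter_odd σ (by omega),
            letter_odd (delTop σ) (by omega), hq', hτq, hτm]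
end PCB

namespace PCB
variable {n : ℕ}

lemma getElem_pair (m : ℕ) (hm : m < ([false, false] : List Bool).length) :
    ([false, false] : List Bool)[m] = false := by
  simp at hm
  interval_cases m <;> rfl

lemma letter_kOf_false (σ : Perm (Fin (n + 1))) (h : kOf σ < 2 * n) :
    letter (delTop σ) (kOf σ) = false := by
  have hP := Ppos_mem σ
  have htop := extPerm_Ppos σ
  by_cases hPt : Ppos σ = n + 1
  · rw [kOf_eq_top σ hPt] at h; omega
  · have hb := b_facts σ (by omega)
    by_cases hab : extPerm σ (Ppos σ - 1) < extPerm σ (Ppos σ + 1)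
    · -- k = 2(b-1)+1, odd letter of b in τ is (b < a), false
      have hk := kOf_eq_odd σ hPt hab
      have hdiv : kOf σ / 2 + 1 = extPerm σ (Ppos σ + 1) := by rw [hk]; omega
      have hposb : posOf (delTop σ) (extPerm σ (Ppos σ + 1)) = Ppos σ := by
        rw [posOf_delTop_ge σ hb.1 hb.2.1 (by rw [hb.2.2]; omega), hb.2.2]; omega
      have hτa : extPerm (delTop σ) (Ppos σ - 1) = extPerm σ (Ppos σ - 1) := by
        by_cases h0 : Ppos σ - 1 = 0
        · rw [h0, extPerm_zero, extPerm_zero]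
        · exact extPerm_delTop_lt σ (by omega) (by omega)
      rw [letter_odd (delTop σ) (by rw [hk]; omega), hdiv,
        extPerm_posOf (delTop σ) hb.1 hb.2.1, hposb, hτa]
      simp; omega
    · have hk := kOf_eq_even σ hPt hab
      have ha := a_facts σ (two_le_Ppos σ hPt hab)
      have hdiv : kOf σ / 2 + 1 = extPerm σ (Ppos σ - 1) := by rw [hk]; omega
      have hposa : posOf (delTop σ) (extPerm σ (Ppos σ - 1)) = Ppos σ - 1 := by
        rw [posOf_delTop_lt σ ha.1 ha.2.1 (by rw [ha.2.2]; omega), ha.2.2]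
      rw [letter_even (delTop σ) (by rw [hk]; omega), hdiv,
        extPerm_posOf (delTop σ) ha.1 ha.2.1, hposa, show Ppos σ - 1 + 1 = Ppos σ by omega,
        extPerm_delTop_ge σ (by omega) le_rfl (by omega)]
      simp; omega

lemma profile_delTop (σ : Perm (Fin (n + 1))) :
    profile σ = (profile (delTop σ) ++ [false, false]).set (kOf σ) true := by
  have hkle := kOf_le σ
  have hlen : (profile (delTop σ) ++ [false, false]).length = 2 * n + 2 := by
    simp [length_profile]
  apply List.ext_getElem
  · simp [length_profile]; omega
  · intro i h1 h2
    rw [length_profile] at h1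
    rw [getElem_profile σ h1, letter_key σ h1, List.getElem_set]
    by_cases hik : i = kOf σ
    · rw [if_pos hik, if_pos hik.symm]
    · rw [if_neg hik, if_neg (Ne.symm hik)]
      by_cases hi2 : i < 2 * n
      · rw [if_pos hi2, List.getElem_append_left (by rw [length_profile]; exact hi2),
          getElem_profile (delTop σ) hi2]
      · rw [if_neg hi2, List.getElem_append_right (by rw [length_profile]; omega)]
        exact (getElem_pair _ _).symm

lemma ribbon_profile (σ : Perm (Fin (n + 1))) :
    Ribbon (profile (delTop σ)) (profile σ) := by
  have hkle := kOf_le σ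
  refine ⟨kOf σ, by rw [length_profile]; omega, ?_, profile_delTop σ⟩
  have hk2 : kOf σ < (profile (delTop σ) ++ [false, false]).length := by
    simp [length_profile]; omega
  rw [List.getElem?_eq_getElem hk2]
  by_cases h : kOf σ < 2 * n
  · rw [List.getElem_append_left (by rw [length_profile]; exact h),
      getElem_profile (delTop σ) h, letter_kOf_false σ h]
  · rw [List.getElem_append_right (by rw [length_profile]; omega), getElem_pair]

end PCB

namespace PCB

lemma prefix_bound {D : List Bool} (hD : IsDyck D) (p : ℕ) :
    ((D ++ [false, false]).take p).count false
      ≤ ((D ++ [false, false]).take p).count true + 2 := by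
  rw [List.take_append, List.count_append, List.count_append]
  have h1 := hD.1 p
  have h2 : (([false, false] : List Bool).take (p - D.length)).count false ≤ 2 :=
    le_trans List.count_le_length (by simp)
  omega

lemma ribbon_isDyck {D E : List Bool} (hD : IsDyck D) (hR : Ribbon D E) : IsDyck E := by
  obtain ⟨k, hk, hfalse, hE⟩ := hR
  have hkL : k < (D ++ [false, false]).length := by simp; omega
  have hLk : (D ++ [false, false])[k] = false := by
    rw [List.getElem?_eq_getElem hkL] at hfalse
    exact Option.some.inj hfalse
  have hL' : D ++ [false, false]
      = (D ++ [false, false]).take k ++ false :: (D ++ [false, false]).drop (k + 1) := by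
    conv_lhs => rw [← List.take_append_drop k (D ++ [false, false])]
    rw [List.drop_eq_getElem_cons hkL, hLk]
  have hset : E = (D ++ [false, false]).take k ++ true :: (D ++ [false, false]).drop (k + 1) :=
    hE.trans (List.set_eq_take_cons_drop _ hkL)
  constructor
  · intro p
    by_cases hpk : p ≤ k
    · have htk : E.take p = (D ++ [false, false]).take p := by
        rw [hset, List.take_append, List.length_take,
          show p - min k (D ++ [false, false]).length = 0 by omega, List.take_take,
          show min p k = p by omega]
        simp
      rw [htk, List.take_append, show p - D.length = 0 by omega]
      simp [hD.1 p]
    · have hkE : k ≤ (E.take p).length ∧ k ≤ ((D ++ [false, false]).take p).length := by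
        constructor <;> rw [List.length_take] <;> · rw [hset] at * ; simp at hkL ⊢; omega
      have htE : E.take p = (D ++ [false, false]).take k
          ++ true :: ((D ++ [false, false]).drop (k + 1)).take (p - k - 1) := by
        rw [hset, List.take_append, List.length_take,
          show min k (D ++ [false, false]).length = k by omega, List.take_take,
          show min p k = k by omega, show p - k = (p - k - 1) + 1 by omega,
          List.take_succ_cons]
        norm_num
      have htL : (D ++ [false, false]).take p = (D ++ [false, false]).take k
          ++ false :: ((D ++ [false, false]).drop (k + 1)).take (p - k - 1) := by
        conv_lhs => rw [hL']
        rw [List.take_append, List.length_take,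
          show min k (D ++ [false, false]).length = k by omega, List.take_take,
          show min p k = k by omega, show p - k = (p - k - 1) + 1 by omega,
          List.take_succ_cons]
        norm_num
      have hbd := prefix_bound hD p
      rw [htL, List.count_append, List.count_append, List.count_cons, List.count_cons] at hbd
      rw [htE, List.count_append, List.count_append, List.count_cons, List.count_cons]
      simp at hbd ⊢
      omega
  · have hcount := hD.2
    have h1 : (D ++ [false, false]).count false = D.count false + 2 := by simp
    have h2 : (D ++ [false, false]).count true = D.count true := by simp
    rw [hL'] at h1 h2
    rw [hset]
    simp only [List.count_append, List.count_cons] at h1 h2 ⊢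
    simp at h1 h2 ⊢
    omega

lemma isDyck_profile : ∀ (m : ℕ) (σ : Perm (Fin m)), IsDyck (profile σ)
  | 0, σ => by
    have : profile σ = [] := by simp [profile_eq]
    rw [this]
    exact ⟨by simp, by simp⟩
  | m + 1, σ => ribbon_isDyck (isDyck_profile m (delTop σ)) (ribbon_profile σ)

end PCB

namespace PCB
variable {n : ℕ}

/-- Insert the value `n+1` at (0-indexed) position `p`. -/
def ins (τ : Perm (Fin n)) (p : Fin (n + 1)) : Perm (Fin (n + 1)) :=
  (finSuccEquiv' p).trans ((Equiv.optionCongr τ).trans (finSuccEquiv' (Fin.last n)).symm)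

lemma ins_apply_self (τ : Perm (Fin n)) (p : Fin (n + 1)) : ins τ p p = Fin.last n := by
  simp [ins, finSuccEquiv'_at, finSuccEquiv'_symm_none]

lemma ins_apply_succAbove (τ : Perm (Fin n)) (p : Fin (n + 1)) (j : Fin n) :
    ins τ p (p.succAbove j) = Fin.castSucc (τ j) := by
  simp [ins, finSuccEquiv'_succAbove, finSuccEquiv'_symm_some]

lemma ins_symm_last (τ : Perm (Fin n)) (p : Fin (n + 1)) :
    (ins τ p).symm (Fin.last n) = p := by
  rw [Equiv.symm_apply_eq, ins_apply_self]

lemma delTop_ins (τ : Perm (Fin n)) (p : Fin (n + 1)) : delTop (ins τ p) = τ := by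
  apply Equiv.ext; intro j
  apply Fin.ext
  rw [delTop_apply, ins_symm_last, ins_apply_succAbove]
  simp

lemma ins_delTop (σ : Perm (Fin (n + 1))) : ins (delTop σ) (σ.symm (Fin.last n)) = σ := by
  apply Equiv.ext; intro i
  by_cases hi : i = σ.symm (Fin.last n)
  · rw [hi, ins_apply_self, Equiv.apply_symm_apply]
  · obtain ⟨j, hj⟩ := Fin.exists_succAbove_eq hi
    rw [← hj, ins_apply_succAbove]
    have hd : delTop σ j
        = (σ ((σ.symm (Fin.last n)).succAbove j)).castPred
          (fun h => Fin.succAbove_ne (σ.symm (Fin.last n)) j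
            (by simpa using congrArg σ.symm h)) := rfl
    rw [hd, Fin.castSucc_castPred]

lemma Ppos_ins (τ : Perm (Fin n)) (p : Fin (n + 1)) : Ppos (ins τ p) = (p : ℕ) + 1 := by
  rw [Ppos, ins_symm_last]

lemma set_inj {L : List Bool} {k k' : ℕ} (hk : k < L.length) (hk' : k' < L.length)
    (h1 : L[k]? = some false) (h2 : L[k']? = some false)
    (h : L.set k true = L.set k' true) : k = k' := by
  by_contra hne
  rw [List.getElem?_eq_getElem hk] at h1
  have e1 : (L.set k true)[k]? = some true := by
    rw [List.getElem?_eq_getElem (by simpa using hk), List.getElem_set]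
    simp
  rw [h, List.getElem?_eq_getElem (by simpa using hk), List.getElem_set,
    if_neg (Ne.symm hne)] at e1
  have := h1.symm.trans e1
  simp at this

/-- Recover the (1-indexed) position of the max from the deleted permutation
and the flip index. -/
def recoverP (τ : Perm (Fin n)) (k : ℕ) : ℕ :=
  if k = 2 * n then n + 1 else if k % 2 = 1 then posOf τ (k / 2 + 1) else posOf τ (k / 2 + 1) + 1

lemma recoverP_kOf (σ : Perm (Fin (n + 1))) : recoverP (delTop σ) (kOf σ) = Ppos σ := by
  have hP := Ppos_mem σ
  by_cases hPt : Ppos σ = n + 1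
  · rw [kOf_eq_top σ hPt, recoverP, if_pos rfl, hPt]
  · have hb := b_facts σ (by omega)
    by_cases hab : extPerm σ (Ppos σ - 1) < extPerm σ (Ppos σ + 1)
    · have hk := kOf_eq_odd σ hPt hab
      have hne : kOf σ ≠ 2 * n := by omega
      have hdiv : kOf σ / 2 + 1 = extPerm σ (Ppos σ + 1) := by rw [hk]; omega
      rw [recoverP, if_neg hne, if_pos (by rw [hk]; omega), hdiv,
        posOf_delTop_ge σ hb.1 hb.2.1 (by rw [hb.2.2]; omega), hb.2.2]
      omega
    · have ha := a_facts σ (two_le_Ppos σ hPt hab)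
      have hk := kOf_eq_even σ hPt hab
      have hne : kOf σ ≠ 2 * n := by omega
      have hdiv : kOf σ / 2 + 1 = extPerm σ (Ppos σ - 1) := by rw [hk]; omega
      rw [recoverP, if_neg hne, if_neg (by rw [hk]; omega), hdiv,
        posOf_delTop_lt σ ha.1 ha.2.1 (by rw [ha.2.2]; omega), ha.2.2]
      omega

lemma kOf_false' (σ : Perm (Fin (n + 1))) :
    (profile (delTop σ) ++ [false, false])[kOf σ]? = some false := by
  have hkle := kOf_le σ
  have hk2 : kOf σ < (profile (delTop σ) ++ [false, false]).length := by
    simp [length_profile]; omega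
  rw [List.getElem?_eq_getElem hk2]
  by_cases h : kOf σ < 2 * n
  · rw [List.getElem_append_left (by rw [length_profile]; exact h),
      getElem_profile (delTop σ) h, letter_kOf_false σ h]
  · rw [List.getElem_append_right (by rw [length_profile]; omega), getElem_pair]

lemma step_inj (σ σ' : Perm (Fin (n + 1))) (hτ : delTop σ = delTop σ')
    (hp : profile σ = profile σ') : σ = σ' := by
  have h1 := profile_delTop σ
  have h2 := profile_delTop σ'
  rw [hτ, hp, h2] at h1
  have hf0 := kOf_false' σ
  rw [hτ] at hf0
  have hkk : kOf σ' = kOf σ :=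
    set_inj (by simp [length_profile]; have := kOf_le σ'; omega)
      (by simp [length_profile]; have := kOf_le σ; omega)
      (kOf_false' σ') hf0 h1
  have hPP : Ppos σ = Ppos σ' := by
    rw [← recoverP_kOf σ, ← recoverP_kOf σ', hτ, hkk]
  have hsym : σ.symm (Fin.last n) = σ'.symm (Fin.last n) := by
    apply Fin.ext
    have := hPP
    rw [Ppos, Ppos] at this
    omega
  rw [← ins_delTop σ, ← ins_delTop σ', hτ, hsym]

end PCB

namespace PCB
variable {n : ℕ}

lemma step_surj (τ : Perm (Fin n)) (k : ℕ) (hk : k < 2 * n + 1)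
    (hf : (profile τ ++ [false, false])[k]? = some false) :
    ∃ σ : Perm (Fin (n + 1)), delTop σ = τ
      ∧ profile σ = (profile τ ++ [false, false]).set k true := by
  by_cases hk2n : k = 2 * n
  · refine ⟨ins τ (Fin.last n), delTop_ins τ _, ?_⟩
    have hPt : Ppos (ins τ (Fin.last n)) = n + 1 := by rw [Ppos_ins]; simp
    rw [profile_delTop (ins τ (Fin.last n)), delTop_ins, kOf_eq_top _ hPt, hk2n]
  · have hklt : k < 2 * n := by omega
    have hfl : letter τ k = false := by
      rw [List.getElem?_eq_getElem (by simp [length_profile]; omega)] at hf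
      have h0 := Option.some.inj hf
      rwa [List.getElem_append_left (by rw [length_profile]; exact hklt),
        getElem_profile τ hklt] at h0
    have hv1 : 1 ≤ k / 2 + 1 := by omega
    have hv2 : k / 2 + 1 ≤ n := by omega
    have hq0 := posOf_mem τ hv1 hv2
    have hτv := extPerm_posOf τ hv1 (by omega)
    by_cases hpar : k % 2 = 1
    · -- odd letter: insert the max just before the value v = k/2+1
      have hab0 : ¬ (k / 2 + 1 < extPerm τ (posOf τ (k / 2 + 1) - 1)) := by
        rw [letter_odd τ hpar, hτv] at hfl
        simpa using hfl
      refine ⟨ins τ ⟨posOf τ (k / 2 + 1) - 1, by omega⟩, delTop_ins τ _, ?_⟩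
      set σ := ins τ ⟨posOf τ (k / 2 + 1) - 1, by omega⟩ with hσ
      have hτ : delTop σ = τ := delTop_ins τ _
      have hPp : Ppos σ = posOf τ (k / 2 + 1) := by rw [hσ, Ppos_ins]; simp; omega
      have hPP := Ppos_mem σ
      have hposv : posOf σ (k / 2 + 1) = posOf τ (k / 2 + 1) + 1 := by
        have hneq := posOf_ne_Ppos σ hv1 hv2
        rcases lt_or_gt_of_ne hneq with hlt | hgt
        · have := posOf_delTop_lt σ hv1 hv2 hlt
          rw [hτ] at this
          omega
        · have := posOf_delTop_ge σ hv1 hv2 hgt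
          rw [hτ] at this
          have := posOf_mem σ hv1 (by omega : k / 2 + 1 ≤ n + 1)
          omega
      have hb : extPerm σ (Ppos σ + 1) = k / 2 + 1 := by
        rw [hPp, ← hposv]
        exact extPerm_posOf σ hv1 (by omega)
      have ha : extPerm σ (Ppos σ - 1) = extPerm τ (posOf τ (k / 2 + 1) - 1) := by
        by_cases h0 : posOf τ (k / 2 + 1) - 1 = 0
        · rw [hPp, h0, extPerm_zero, extPerm_zero]
        · have := extPerm_delTop_lt σ (i := posOf τ (k / 2 + 1) - 1) (by omega) (by omega)
          rw [hτ] at this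
          rw [hPp, ← this]
      have hab : extPerm σ (Ppos σ - 1) < extPerm σ (Ppos σ + 1) := by
        rw [ha, hb]
        by_cases hq01 : posOf τ (k / 2 + 1) = 1
        · rw [hq01]
          simp [extPerm_zero]
        · have hne := ab_ne σ (by omega) (by omega)
          rw [ha, hb] at hne
          omega
      have hkof : kOf σ = k := by
        rw [kOf_eq_odd σ (by omega) hab, hb]
        omega
      rw [profile_delTop σ, hτ, hkof]
    · -- even letter: insert the max just after the value v = k/2+1
      have hab0 : ¬ (k / 2 + 1 < extPerm τ (posOf τ (k / 2 + 1) + 1)) := by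
        rw [letter_even τ (by omega), hτv] at hfl
        simpa using hfl
      have hq0n : posOf τ (k / 2 + 1) < n := by
        rcases Nat.lt_or_ge (posOf τ (k / 2 + 1)) n with h | h
        · exact h
        · exfalso
          rw [extPerm_of_gt τ (by omega)] at hab0
          omega
      refine ⟨ins τ ⟨posOf τ (k / 2 + 1), by omega⟩, delTop_ins τ _, ?_⟩
      set σ := ins τ ⟨posOf τ (k / 2 + 1), by omega⟩ with hσ
      have hτ : delTop σ = τ := delTop_ins τ _
      have hPp : Ppos σ = posOf τ (k / 2 + 1) + 1 := by rw [hσ, Ppos_ins]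
      have hposv : posOf σ (k / 2 + 1) = posOf τ (k / 2 + 1) := by
        have hneq := posOf_ne_Ppos σ hv1 hv2
        rcases lt_or_gt_of_ne hneq with hlt | hgt
        · have := posOf_delTop_lt σ hv1 hv2 hlt
          rw [hτ] at this
          omega
        · have := posOf_delTop_ge σ hv1 hv2 hgt
          rw [hτ] at this
          omega
      have ha : extPerm σ (Ppos σ - 1) = k / 2 + 1 := by
        rw [hPp, Nat.add_sub_cancel, ← hposv]
        exact extPerm_posOf σ hv1 (by omega)
      have hbb : extPerm σ (Ppos σ + 1) = extPerm τ (posOf τ (k / 2 + 1) + 1) := by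
        have := extPerm_delTop_ge σ (i := posOf τ (k / 2 + 1) + 1) (by omega)
          (by omega) (by omega)
        rw [hτ] at this
        rw [hPp, ← this]
      have hab : ¬ extPerm σ (Ppos σ - 1) < extPerm σ (Ppos σ + 1) := by
        rw [ha, hbb]; exact hab0
      have hkof : kOf σ = k := by
        rw [kOf_eq_even σ (by omega) hab, ha]
        omega
      rw [profile_delTop σ, hτ, hkof]

end PCB

namespace PCB
variable {n : ℕ}

lemma delTop'_heq {a b : ℕ} (h : a = b) (ρ : Perm (Fin a)) (ρ' : Perm (Fin b))
    (he : HEq ρ ρ') : HEq (delTop' ρ) (delTop' ρ') := by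
  subst h
  obtain rfl := eq_of_heq he
  exact HEq.rfl

lemma dels_heq_delTop (σ : Perm (Fin (n + 1))) :
    ∀ m, HEq (dels σ (m + 1)) (dels (delTop σ) m)
  | 0 => HEq.rfl
  | m + 1 => delTop'_heq (Nat.succ_sub_succ n m) _ _ (dels_heq_delTop σ m)

lemma profile_congr_heq {a b : ℕ} (h : a = b) (ρ : Perm (Fin a)) (ρ' : Perm (Fin b))
    (he : HEq ρ ρ') : profile ρ = profile ρ' := by
  subst h
  rw [eq_of_heq he]

lemma profile_dels_succ (σ : Perm (Fin (n + 1))) (m : ℕ) :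
    profile (dels σ (m + 1)) = profile (dels (delTop σ) m) :=
  profile_congr_heq (by omega) _ _ (dels_heq_delTop σ m)

lemma perm_eq_of_le_one : ∀ (s : ℕ), s ≤ 1 → ∀ (a b : Perm (Fin s)), a = b := by
  intro s hs a b
  apply Equiv.ext
  intro x
  have h1 := x.isLt
  have h2 := (a x).isLt
  have h3 := (b x).isLt
  apply Fin.ext
  omega

lemma recon' : ∀ (s : ℕ), 0 < s → ∀ (ρ ρ' : Perm (Fin s)),
    delTop' ρ = delTop' ρ' → profile ρ = profile ρ' → ρ = ρ'
  | 0, h, _, _, _, _ => absurd h (by omega)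
  | s + 1, _, ρ, ρ', hτ, hp => step_inj ρ ρ' hτ hp

lemma ribbon_profile_delTop' : ∀ (s : ℕ), 0 < s → ∀ ρ : Perm (Fin s),
    Ribbon (profile (delTop' ρ)) (profile ρ)
  | 0, h, _ => absurd h (by omega)
  | s + 1, _, ρ => ribbon_profile ρ

lemma dyck_two {l : List Bool} (hD : IsDyck l) (hl : l.length = 2) : l = [true, false] := by
  match l, hl with
  | [x, y], _ =>
    have h1 := hD.1 1
    have h2 := hD.2
    cases x
    · simp [List.take, List.count_cons] at h1
    · cases y
      · rfl
      · simp [List.count_cons] at h2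

end PCB

namespace PCB

lemma rib_aux (n : ℕ) (σ : Perm (Fin n)) (i : ℕ) (h : i + 1 < n) :
    Ribbon (profile (dels σ (n - 1 - i))) (profile (dels σ (n - 1 - (i + 1)))) := by
  rw [show n - 1 - i = (n - 1 - (i + 1)) + 1 by omega]
  exact ribbon_profile_delTop' (n - (n - 1 - (i + 1))) (by omega) _

lemma inj_aux (n : ℕ) (σ σ' : Perm (Fin n))
    (h : ∀ m, m < n → profile (dels σ m) = profile (dels σ' m)) : σ = σ' := by
  rcases Nat.eq_zero_or_pos n with h0 | h0
  · subst h0; exact perm_eq_of_le_one 0 (by omega) σ σ'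
  · have claim : ∀ j, j < n → dels σ (n - 1 - j) = dels σ' (n - 1 - j) := by
      intro j
      induction j with
      | zero => exact fun _ => perm_eq_of_le_one _ (by omega) _ _
      | succ j ih =>
        intro hj
        have e := ih (by omega)
        rw [show n - 1 - j = (n - 1 - (j + 1)) + 1 by omega] at e
        exact recon' _ (by omega) _ _ e (h _ (by omega))
    have hfin := claim (n - 1) (by omega)
    rw [show n - 1 - (n - 1) = 0 by omega] at hfin
    exact hfin

lemma surj_aux : ∀ (n : ℕ) (C : Fin n → List Bool),
    (∀ i : Fin n, IsDyck (C i) ∧ (C i).length = 2 * ((i : ℕ) + 1)) →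
    (∀ i : ℕ, (h : i + 1 < n) → Ribbon (C ⟨i, Nat.lt_of_succ_lt h⟩) (C ⟨i + 1, h⟩)) →
    ∃ σ : Perm (Fin n), ∀ i : Fin n, profile (dels σ (n - 1 - (i : ℕ))) = C i := by
  intro N
  induction N with
  | zero => exact fun C _ _ => ⟨Equiv.refl _, fun i => absurd i.isLt (by omega)⟩
  | succ n ih =>
    intro C h1 h2
    obtain ⟨τ, hτC⟩ := ih (fun i => C ⟨(i : ℕ), by omega⟩)
      (fun i => h1 ⟨(i : ℕ), by omega⟩)
      (fun i hi => h2 i (by omega))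
    have hribn : Ribbon (profile τ) (C ⟨n, by omega⟩) := by
      rcases Nat.eq_zero_or_pos n with h0 | h0
      · subst h0
        have hd := h1 ⟨0, by omega⟩
        have hC0 : C ⟨0, by omega⟩ = [true, false] := dyck_two hd.1 hd.2
        have hpt : profile τ = [] := by simp [profile_eq]
        rw [hC0, hpt]
        exact ⟨0, by simp, by simp, by simp⟩
      · have hc := h2 (n - 1) (by omega)
        have hm : (⟨n - 1 + 1, by omega⟩ : Fin (n + 1)) = ⟨n, by omega⟩ :=
          Fin.ext (by simp; omega)
        rw [hm] at hc
        have h4 : profile (dels τ (n - 1 - (n - 1))) = C ⟨n - 1, by omega⟩ :=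
          hτC ⟨n - 1, by omega⟩
        rw [show n - 1 - (n - 1) = 0 by omega] at h4
        have h3 : profile τ = C ⟨n - 1, by omega⟩ := h4
        rwa [← h3] at hc
    obtain ⟨k, hk, hf, hE⟩ := hribn
    rw [length_profile] at hk
    obtain ⟨σ, hτσ, hprof⟩ := step_surj τ k hk hf
    refine ⟨σ, fun i => ?_⟩
    by_cases hi : (i : ℕ) = n
    · rw [show n + 1 - 1 - (i : ℕ) = 0 by omega]
      have h6 : (⟨n, by omega⟩ : Fin (n + 1)) = i := Fin.ext (by simp [hi])
      rw [← h6, hE]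
      exact hprof
    · have hi' : (i : ℕ) < n := by have := i.isLt; omega
      rw [show n + 1 - 1 - (i : ℕ) = (n - 1 - (i : ℕ)) + 1 by omega, profile_dels_succ σ, hτσ]
      have h7 := hτC ⟨(i : ℕ), hi'⟩
      have h8 : (⟨(i : ℕ), by omega⟩ : Fin (n + 1)) = i := Fin.ext rfl
      rw [← h8]
      exact h7

end PCB

theorem profile_chain_bijection' (n : ℕ) :
    Set.BijOn (fun (σ : Equiv.Perm (Fin n)) (i : Fin n) =>
        profile (dels σ (n - 1 - (i : ℕ))))
      Set.univ
      {C : Fin n → List Bool |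
        (∀ i : Fin n, IsDyck (C i) ∧ (C i).length = 2 * ((i : ℕ) + 1)) ∧
        ∀ i : ℕ, (h : i + 1 < n) →
          Ribbon (C ⟨i, Nat.lt_of_succ_lt h⟩) (C ⟨i + 1, h⟩)} := by
  refine ⟨?_, ?_, ?_⟩
  · intro σ _
    refine ⟨fun i => ⟨PCB.isDyck_profile _ _, ?_⟩, fun i h => PCB.rib_aux n σ i h⟩
    rw [PCB.length_profile]
    have := i.isLt
    omega
  · intro σ _ σ' _ h
    apply PCB.inj_aux n σ σ'
    intro m hm
    have hcf : profile (dels σ (n - 1 - (n - 1 - m)))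
        = profile (dels σ' (n - 1 - (n - 1 - m))) := congrFun h ⟨n - 1 - m, by omega⟩
    rw [show n - 1 - (n - 1 - m) = m by omega] at hcf
    exact hcf
  · intro C hC
    obtain ⟨h1, h2⟩ := hC
    obtain ⟨σ, hσ⟩ := PCB.surj_aux n C h1 h2
    exact ⟨σ, Set.mem_univ σ, funext hσ⟩

/-- The map `σ ↦ (Δ(σ^{(n-1)}), …, Δ(σ'), Δ(σ))` is a bijection from `S_n` to
the set of `n`-chains of Dyck shapes `D₁ ⊏ ⋯ ⊏ Dₙ`, where `Dᵢ` is a Dyck path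
of length `2i` and `⊏` is ribbon addition. -/
theorem profile_chain_bijection (n : ℕ) :
    Set.BijOn (fun (σ : Equiv.Perm (Fin n)) (i : Fin n) =>
        profile (dels σ (n - 1 - (i : ℕ))))
      Set.univ
      {C : Fin n → List Bool |
        (∀ i : Fin n, IsDyck (C i) ∧ (C i).length = 2 * ((i : ℕ) + 1)) ∧
        ∀ i : ℕ, (h : i + 1 < n) →
          Ribbon (C ⟨i, by omega⟩) (C ⟨i + 1, h⟩)} := by
  exact profile_chain_bijection' n
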